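/- Let G be a finite simple graph with a k-lettering given by decoder D, letters L, and order ord. If u and w are distinct vertices with L u = L w and ord u < ord w, and a third vertex v is adjacent to exactly one of u and w (i.e., v distinguishes u and w), then ord u < ord v < ord w. -/
import Mathlib

/-- In any lettering of a graph, if two vertices `u` and `w` get the same letter
with `ord u < ord w`, and a third vertex `v` distinguishes them (is adjacent to
exactly one of them), then `v` must lie between them: `ord u < ord v < ord w`. -/
theorem distinguisher_between (V : Type) [Fintype V] (G : SimpleGraph V) (k : ℕ)
    (D : Set (Fin k × Fin k)) (L : V → Fin k) (ord : V → ℕ)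
    (hinj : Function.Injective ord)
    (hlet : ∀ u v : V, u ≠ v → ord u < ord v → (G.Adj u v ↔ (L u, L v) ∈ D))
    (u w v : V) (huw : u ≠ w) (hL : L u = L w) (hord : ord u < ord w)
    (hvu : v ≠ u) (hvw : v ≠ w)
    (hdist : Xor' (G.Adj v u) (G.Adj v w)) :
    ord u < ord v ∧ ord v < ord w := by
  have hne1 : ord v ≠ ord u := fun h => hvu (hinj h)
  have hne2 : ord v ≠ ord w := fun h => hvw (hinj h)
  constructor
  · by_contra h
    have hlt : ord v < ord u := lt_of_le_of_ne (le_of_not_gt h) hne1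
    have h1 := hlet v u hvu hlt
    have h2 := hlet v w hvw (hlt.trans hord)
    rw [hL] at h1
    rcases hdist with ⟨ha, hb⟩ | ⟨ha, hb⟩
    · exact hb (h2.mpr (h1.mp ha))
    · exact hb (h1.mpr (h2.mp ha))
  · by_contra h
    have hlt : ord w < ord v := lt_of_le_of_ne (le_of_not_gt h) hne2.symm
    have h1 := hlet u v hvu.symm (hord.trans hlt)
    have h2 := hlet w v hvw.symm hlt
    rw [hL] at h1
    rcases hdist with ⟨ha, hb⟩ | ⟨ha, hb⟩
    · exact hb ((h2.mpr (h1.mp ha.symm)).symm)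
    · exact hb ((h1.mpr (h2.mp ha.symm)).symm)
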